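/- (Identification of deformations with solutions of the system (1)-(2).) Suppose x⁰ ∈ k[[t]]ⁿ, y⁰ ∈ k[[t]]ˡ satisfy f(x⁰,y⁰) = 0 and Q(x⁰,y⁰) ≠ 0 in k[[t]], with t-adic order d. Let A be a test ring with maximal ideal m. For every pair (x,y) ∈ A[[t]]ⁿ × A[[t]]ˡ with f(x,y) = 0 that reduces to (x⁰,y⁰) mod m, there is a unique monic polynomial q ∈ A[t] of degree d with all coefficients of q − tᵈ in m such that Q(x,y) ∈ qA[[t]], and moreover Q(x,y) = q·u with u invertible in A[[t]]. Consequently, the map (x,y) ↦ (q,x,y) is a bijection from the set of such pairs (x,y) onto the set of triples (q,x,y) where q ∈ A[t] is monic of degree d with q − tᵈ ∈ m[t], x and y reduce to x⁰ and y⁰ mod m, Q(x,y) ∈ qA[[t]], and f(x,y) = 0. -/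

import Mathlib

open MvPolynomial IsLocalRing

noncomputable section

/-- The `l×l` Jacobian matrix `C(x,y)` of `f` with respect to the `y`-variables. -/
def jacC {k : Type*} [Field k] {n l : ℕ} (f : Fin l → MvPolynomial (Fin n ⊕ Fin l) k) :
    Matrix (Fin l) (Fin l) (MvPolynomial (Fin n ⊕ Fin l) k) :=
  Matrix.of fun i j => pderiv (Sum.inr j) (f i)

/-- `Q(x,y) := det C(x,y)`. -/
def jacQ {k : Type*} [Field k] {n l : ℕ} (f : Fin l → MvPolynomial (Fin n ⊕ Fin l) k) :
    MvPolynomial (Fin n ⊕ Fin l) k :=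
  (jacC f).det

/-- `(x,y)` is an `A`-deformation of `(x⁰,y⁰)` solving `f = 0`:  `f(x,y) = 0` and `(x,y)`
reduces to `(x⁰,y⁰)` coefficientwise modulo the maximal ideal. -/
def pairCond {k : Type*} [Field k] {n l : ℕ} (f : Fin l → MvPolynomial (Fin n ⊕ Fin l) k)
    (x0 : Fin n → PowerSeries k) (y0 : Fin l → PowerSeries k)
    {A : Type*} [CommRing A] [Algebra k A] [IsLocalRing A]
    (p : (Fin n → PowerSeries A) × (Fin l → PowerSeries A)) : Prop :=
  (∀ i, aeval (Sum.elim p.1 p.2) (f i) = 0) ∧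
  (∀ i j, PowerSeries.coeff j (p.1 i) -
    algebraMap k A (PowerSeries.coeff j (x0 i)) ∈ maximalIdeal A) ∧
  (∀ i j, PowerSeries.coeff j (p.2 i) -
    algebraMap k A (PowerSeries.coeff j (y0 i)) ∈ maximalIdeal A)

/-- `q` is monic of degree `d` and congruent to `tᵈ` modulo the maximal ideal. -/
def qCond {A : Type*} [CommRing A] [IsLocalRing A] (d : ℕ) (q : Polynomial A) : Prop :=
  q.Monic ∧ q.natDegree = d ∧ ∀ i, (q - Polynomial.X ^ d).coeff i ∈ maximalIdeal A

section Aux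

variable {A : Type*} [CommRing A]

open PowerSeries

/-- coefficients of a product, left factor has coefficients in `I`. -/
lemma aux_coeff_mul_left {I : Ideal A} {x y : PowerSeries A}
    (hx : ∀ i, PowerSeries.coeff i x ∈ I) (i : ℕ) :
    PowerSeries.coeff i (x * y) ∈ I := by
  rw [PowerSeries.coeff_mul]
  exact Ideal.sum_mem _ fun p _ => I.mul_mem_right _ (hx p.1)

lemma aux_coeff_mul {I J : Ideal A} {x y : PowerSeries A}
    (hx : ∀ i, PowerSeries.coeff i x ∈ I) (hy : ∀ i, PowerSeries.coeff i y ∈ J) (i : ℕ) :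
    PowerSeries.coeff i (x * y) ∈ I * J := by
  rw [PowerSeries.coeff_mul]
  exact Ideal.sum_mem _ fun p _ => Ideal.mul_mem_mul (hx p.1) (hy p.2)

variable [IsLocalRing A]

lemma aux_isUnit_one_add {x : A} (hx : x ∈ maximalIdeal A) : IsUnit (1 + x) := by
  by_contra h
  have h1 : (1 + x) ∈ maximalIdeal A := (IsLocalRing.mem_maximalIdeal _).2 h
  have : (1 : A) ∈ maximalIdeal A := by simpa using sub_mem h1 hx
  exact (Ideal.IsMaximal.ne_top (maximalIdeal.isMaximal A))
    (Ideal.eq_top_iff_one _ |>.2 this)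

/-- Weierstrass approximation step: for each `N` there are `q, u` with error in `m^(N+1)`. -/
lemma aux_wprep (d : ℕ) (g : PowerSeries A)
    (hl : ∀ j < d, PowerSeries.coeff j g ∈ maximalIdeal A)
    (hd : IsUnit (PowerSeries.coeff d g)) (N : ℕ) :
    ∃ q : Polynomial A, ∃ u : PowerSeries A, qCond d q ∧ IsUnit u ∧
      ∀ j, PowerSeries.coeff j (g - (q : PowerSeries A) * u) ∈ (maximalIdeal A) ^ (N + 1) := by
  induction N with
  | zero =>
      refine ⟨Polynomial.X ^ d, PowerSeries.mk fun j => PowerSeries.coeff (d + j) g, ?_, ?_, ?_⟩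
      · exact ⟨Polynomial.monic_X_pow d, Polynomial.natDegree_X_pow d,
          fun i => by simp⟩
      · rw [PowerSeries.isUnit_iff_constantCoeff]
        simpa using hd
      · intro j
        rw [pow_one]
        have : ((Polynomial.X ^ d : Polynomial A) : PowerSeries A) = (PowerSeries.X : PowerSeries A) ^ d := by
          push_cast; ring
        rw [this, map_sub, PowerSeries.coeff_X_pow_mul']
        by_cases hj : d ≤ j
        · rw [if_pos hj, PowerSeries.coeff_mk]
          simp [Nat.add_sub_cancel' hj]
        · rw [if_neg hj]
          simpa using hl j (lt_of_not_ge hj)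
  | succ N ih =>
      obtain ⟨q, u, hq, hu, hE⟩ := ih
      obtain ⟨U, hU⟩ := hu
      set uinv : PowerSeries A := ((U⁻¹ : (PowerSeries A)ˣ) : PowerSeries A) with huinv
      have huu : u * uinv = 1 := by rw [← hU, huinv]; exact_mod_cast U.mul_inv
      set F : PowerSeries A := (g - (q : PowerSeries A) * u) * uinv with hF
      have hFc : ∀ i, PowerSeries.coeff i F ∈ (maximalIdeal A) ^ (N + 1) :=
        fun i => aux_coeff_mul_left hE i
      set a' : PowerSeries A := PowerSeries.mk fun j => PowerSeries.coeff (d + j) F with ha'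
      set r : Polynomial A := PowerSeries.trunc d F with hr
      have hrc : ∀ i, r.coeff i ∈ (maximalIdeal A) ^ (N + 1) := by
        intro i
        rw [hr, PowerSeries.coeff_trunc]
        split
        · exact hFc i
        · exact Ideal.zero_mem _
      have hrm : ∀ i, r.coeff i ∈ maximalIdeal A :=
        fun i => Ideal.pow_le_self (Nat.succ_ne_zero N) (hrc i)
      have ha'c : ∀ i, PowerSeries.coeff i a' ∈ (maximalIdeal A) ^ (N + 1) := by
        intro i; rw [ha', PowerSeries.coeff_mk]; exact hFc _
      have keyF : (PowerSeries.X : PowerSeries A) ^ d * a' + (r : PowerSeries A) = F := by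
        ext i
        rw [map_add, PowerSeries.coeff_X_pow_mul']
        by_cases hi : d ≤ i
        · rw [if_pos hi, ha', PowerSeries.coeff_mk, Polynomial.coeff_coe, hr,
            PowerSeries.coeff_trunc, if_neg (by omega), Nat.add_sub_cancel' hi, add_zero]
        · rw [if_neg hi, Polynomial.coeff_coe, hr, PowerSeries.coeff_trunc,
            if_pos (by omega), zero_add]
      have hFu : F * u = g - (q : PowerSeries A) * u := by
        rw [hF, mul_assoc, mul_comm uinv u, huu, mul_one]
      have hdegr : r.degree < d := PowerSeries.degree_trunc_lt F d
      have hdegq : q.degree = (d : WithBot ℕ) := by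
        rw [Polynomial.degree_eq_natDegree hq.1.ne_zero, hq.2.1]
      refine ⟨q + r, u * (1 + a'), ⟨?_, ?_, ?_⟩, ?_, ?_⟩
      · exact hq.1.add_of_left (by rw [hdegq]; exact hdegr)
      · rw [Polynomial.natDegree_eq_of_degree_eq
          (Polynomial.degree_add_eq_left_of_degree_lt (by rw [hdegq]; exact hdegr))]
        exact hq.2.1
      · intro i
        have : (q + r - Polynomial.X ^ d).coeff i
            = (q - Polynomial.X ^ d).coeff i + r.coeff i := by
          simp [Polynomial.coeff_sub, Polynomial.coeff_add]; ring
        rw [this]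
        exact add_mem (hq.2.2 i) (hrm i)
      · refine (hU ▸ U.isUnit).mul ?_
        rw [PowerSeries.isUnit_iff_constantCoeff]
        have : PowerSeries.constantCoeff (1 + a') = 1 + PowerSeries.coeff 0 a' := by
          simp [PowerSeries.coeff_zero_eq_constantCoeff]
        rw [map_add]
        exact aux_isUnit_one_add (by
          have := ha'c 0
          rw [PowerSeries.coeff_zero_eq_constantCoeff] at this
          exact Ideal.pow_le_self (Nat.succ_ne_zero N) this)
      · intro j
        have key : g - ((q + r : Polynomial A) : PowerSeries A) * (u * (1 + a'))
            = ((PowerSeries.X ^ d - (q : PowerSeries A)) - (r : PowerSeries A)) * (u * a') := by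
          have h1 : g = (q : PowerSeries A) * u
              + ((PowerSeries.X : PowerSeries A) ^ d * a' + (r : PowerSeries A)) * u := by
            rw [keyF, hFu]; ring
          rw [Polynomial.coe_add, h1]; ring
        rw [key]
        have hs : ∀ i, PowerSeries.coeff i
            ((PowerSeries.X ^ d - (q : PowerSeries A)) - (r : PowerSeries A)) ∈ maximalIdeal A := by
          intro i
          have : PowerSeries.coeff i
              ((PowerSeries.X ^ d - (q : PowerSeries A)) - (r : PowerSeries A))
              = -((q - Polynomial.X ^ d).coeff i + r.coeff i) := by
            simp [Polynomial.coeff_coe, PowerSeries.coeff_X_pow, Polynomial.coeff_X_pow]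
            ring
          rw [this]
          exact neg_mem (add_mem (hq.2.2 i) (hrm i))
        have hw : ∀ i, PowerSeries.coeff i (u * a') ∈ (maximalIdeal A) ^ (N + 1) := by
          intro i
          rw [mul_comm]
          exact aux_coeff_mul_left ha'c i
        have := aux_coeff_mul hs hw j
        rwa [← pow_succ'] at this

lemma aux_exists (d : ℕ) (g : PowerSeries A)
    (hnil : IsNilpotent (maximalIdeal A))
    (hl : ∀ j < d, PowerSeries.coeff j g ∈ maximalIdeal A)
    (hd : IsUnit (PowerSeries.coeff d g)) :
    ∃ q : Polynomial A, ∃ u : PowerSeries A, qCond d q ∧ IsUnit u ∧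
      g = (q : PowerSeries A) * u := by
  obtain ⟨N, hN⟩ := hnil
  obtain ⟨q, u, hq, hu, hE⟩ := aux_wprep d g hl hd N
  refine ⟨q, u, hq, hu, ?_⟩
  have : ∀ j, PowerSeries.coeff j (g - (q : PowerSeries A) * u) = 0 := by
    intro j
    have := hE j
    rw [pow_succ, hN, zero_mul] at this
    simpa using this
  have : g - (q : PowerSeries A) * u = 0 := PowerSeries.ext fun j => by simpa using this j
  exact sub_eq_zero.mp this

/-- In a quotient by the maximal ideal, `q` reduces to `X^d`. -/
lemma aux_map_q (d : ℕ) (q : Polynomial A) (hq : qCond d q) :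
    PowerSeries.map (residue A) (q : PowerSeries A)
      = (PowerSeries.X : PowerSeries (ResidueField A)) ^ d := by
  ext i
  rw [PowerSeries.coeff_map, Polynomial.coeff_coe, PowerSeries.coeff_X_pow]
  have h := hq.2.2 i
  rw [Polynomial.coeff_sub] at h
  have : residue A (q.coeff i - (Polynomial.X ^ d).coeff i) = 0 :=
    (IsLocalRing.residue_eq_zero_iff _).2 h
  rw [map_sub, sub_eq_zero] at this
  rw [this, Polynomial.coeff_X_pow]
  split <;> simp

/-- If `g = q·b` with `q` as in `qCond` and `coeff d g` a unit, then `b` is a unit. -/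
lemma aux_bunit (d : ℕ) (q : Polynomial A) (hq : qCond d q) (g b : PowerSeries A)
    (hd : IsUnit (PowerSeries.coeff d g)) (hfac : g = (q : PowerSeries A) * b) :
    IsUnit b := by
  rw [PowerSeries.isUnit_iff_constantCoeff]
  rw [← IsLocalRing.notMem_maximalIdeal, ← IsLocalRing.residue_eq_zero_iff]
  have hmap : PowerSeries.map (residue A) g
      = (PowerSeries.X : PowerSeries (ResidueField A)) ^ d * PowerSeries.map (residue A) b := by
    rw [hfac, map_mul, aux_map_q d q hq]
  have hcoeff : residue A (PowerSeries.coeff d g)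
      = residue A (PowerSeries.constantCoeff b) := by
    have h1 : PowerSeries.coeff d (PowerSeries.map (residue A) g)
        = residue A (PowerSeries.coeff d g) := by rw [PowerSeries.coeff_map]
    have h2 : PowerSeries.coeff d
        ((PowerSeries.X : PowerSeries (ResidueField A)) ^ d * PowerSeries.map (residue A) b)
        = PowerSeries.coeff 0 (PowerSeries.map (residue A) b) := by
      have := PowerSeries.coeff_X_pow_mul (PowerSeries.map (residue A) b) d 0
      simpa using this
    rw [← h1, hmap, h2, PowerSeries.coeff_map, PowerSeries.coeff_zero_eq_constantCoeff]
  intro h0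
  rw [h0] at hcoeff
  exact (hd.map (residue A)).ne_zero hcoeff

lemma aux_uniq (d : ℕ) (hnil : IsNilpotent (maximalIdeal A))
    (q1 q2 : Polynomial A) (h1 : qCond d q1) (h2 : qCond d q2)
    (b1 b2 : PowerSeries A) (hb1 : IsUnit b1)
    (heq : (q1 : PowerSeries A) * b1 = (q2 : PowerSeries A) * b2) : q1 = q2 := by
  obtain ⟨B1, hB1⟩ := hb1
  set c : PowerSeries A := b2 * (↑B1⁻¹ : Units (PowerSeries A)) with hc
  have hb1inv : b1 * (↑B1⁻¹ : Units (PowerSeries A)) = 1 := by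
    rw [← hB1]; exact_mod_cast B1.mul_inv
  have hq1c : (q1 : PowerSeries A) = (q2 : PowerSeries A) * c := by
    have : (q1 : PowerSeries A) * (b1 * (↑B1⁻¹ : Units (PowerSeries A)))
        = (q2 : PowerSeries A) * (b2 * (↑B1⁻¹ : Units (PowerSeries A))) := by
      rw [← mul_assoc, heq, mul_assoc]
    rwa [hb1inv, mul_one] at this
  set e : PowerSeries A := c - 1 with he
  have key : ∀ J : ℕ, ∀ i, PowerSeries.coeff i e ∈ (maximalIdeal A) ^ J := by
    intro J
    induction J with
    | zero => intro i; rw [pow_zero, Ideal.one_eq_top]; exact Submodule.mem_top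
    | succ J ih =>
        intro i
        have hid : (PowerSeries.X : PowerSeries A) ^ d * e
            = ((q1 : PowerSeries A) - (q2 : PowerSeries A))
              - ((q2 - Polynomial.X ^ d : Polynomial A) : PowerSeries A) * e := by
          have hq2e : (q2 : PowerSeries A) * e = (q1 : PowerSeries A) - (q2 : PowerSeries A) := by
            rw [he, mul_sub, mul_one, ← hq1c]
          have : ((q2 - Polynomial.X ^ d : Polynomial A) : PowerSeries A)
              = (q2 : PowerSeries A) - (PowerSeries.X : PowerSeries A) ^ d := by
            push_cast; ring
          rw [this, sub_mul, ← hq2e]; ring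
        have hco : PowerSeries.coeff i e
            = PowerSeries.coeff (i + d) ((q1 : PowerSeries A) - (q2 : PowerSeries A))
              - PowerSeries.coeff (i + d)
                (((q2 - Polynomial.X ^ d : Polynomial A) : PowerSeries A) * e) := by
          have := congrArg (PowerSeries.coeff (i + d)) hid
          rwa [PowerSeries.coeff_X_pow_mul, map_sub] at this
        have hq12 : PowerSeries.coeff (i + d)
            ((q1 : PowerSeries A) - (q2 : PowerSeries A)) = 0 := by
          rw [map_sub, Polynomial.coeff_coe, Polynomial.coeff_coe]
          rcases Nat.eq_zero_or_pos i with hi | hi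
          · subst hi
            rw [zero_add]
            have e1 : q1.coeff d = 1 := by
              have := h1.1.coeff_natDegree; rwa [h1.2.1] at this
            have e2 : q2.coeff d = 1 := by
              have := h2.1.coeff_natDegree; rwa [h2.2.1] at this
            rw [e1, e2, sub_self]
          · rw [Polynomial.coeff_eq_zero_of_natDegree_lt (by rw [h1.2.1]; omega),
              Polynomial.coeff_eq_zero_of_natDegree_lt (by rw [h2.2.1]; omega), sub_self]
        have hprod : PowerSeries.coeff (i + d)
            (((q2 - Polynomial.X ^ d : Polynomial A) : PowerSeries A) * e)
            ∈ (maximalIdeal A) ^ (J + 1) := by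
          have := aux_coeff_mul (I := maximalIdeal A) (J := (maximalIdeal A) ^ J)
            (x := ((q2 - Polynomial.X ^ d : Polynomial A) : PowerSeries A)) (y := e)
            (fun i => by rw [Polynomial.coeff_coe]; exact h2.2.2 i) ih (i + d)
          rwa [← pow_succ'] at this
        rw [hco, hq12, zero_sub]
        exact neg_mem hprod
  obtain ⟨N, hN⟩ := hnil
  have he0 : e = 0 := by
    ext i
    have := key N i
    rw [hN] at this
    simpa using this
  have : c = 1 := by rw [← sub_eq_zero]; exact he0
  rw [this, mul_one] at hq1c
  exact (Polynomial.coe_inj.mp hq1c.symm).symm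

end Aux


section Red

open PowerSeries

/-- Reduction mod the maximal ideal of an evaluation at a deformation. -/
lemma aux_red {k : Type*} [Field k] {n l : ℕ} (f : Fin l → MvPolynomial (Fin n ⊕ Fin l) k)
    (x0 : Fin n → PowerSeries k) (y0 : Fin l → PowerSeries k)
    {A : Type*} [CommRing A] [Algebra k A] [IsLocalRing A]
    (p : (Fin n → PowerSeries A) × (Fin l → PowerSeries A)) (hp : pairCond f x0 y0 p)
    (P : MvPolynomial (Fin n ⊕ Fin l) k) :
    PowerSeries.map (residue A) (aeval (Sum.elim p.1 p.2) P)
      = PowerSeries.map (algebraMap k (ResidueField A)) (aeval (Sum.elim x0 y0) P) := by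
  have htower : ∀ c : k, algebraMap k (ResidueField A) c = residue A (algebraMap k A c) :=
    fun _ => rfl
  have hbase : (PowerSeries.map (residue A)).comp (algebraMap k (PowerSeries A))
      = (PowerSeries.map (algebraMap k (ResidueField A))).comp (algebraMap k (PowerSeries k)) := by
    ext c
    simp only [RingHom.comp_apply, PowerSeries.algebraMap_apply, Algebra.algebraMap_self,
      RingHom.id_apply, PowerSeries.map_C]
    rfl
  have hfun : (fun v => PowerSeries.map (residue A) (Sum.elim p.1 p.2 v))
      = fun v => PowerSeries.map (algebraMap k (ResidueField A)) (Sum.elim x0 y0 v) := by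
    funext v
    have key : ∀ (a : PowerSeries A) (b : PowerSeries k),
        (∀ j, PowerSeries.coeff j a - algebraMap k A (PowerSeries.coeff j b) ∈ maximalIdeal A)
        → PowerSeries.map (residue A) a = PowerSeries.map (algebraMap k (ResidueField A)) b := by
      intro a b hab
      ext j
      rw [PowerSeries.coeff_map, PowerSeries.coeff_map, htower]
      have := (IsLocalRing.residue_eq_zero_iff _).2 (hab j)
      rw [map_sub, sub_eq_zero] at this
      exact this
    cases v with
    | inl i => exact key _ _ (fun j => hp.2.1 i j)
    | inr i => exact key _ _ (fun j => hp.2.2 i j)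
  rw [aeval_def, aeval_def, MvPolynomial.eval₂_comp_left (PowerSeries.map (residue A)),
    MvPolynomial.eval₂_comp_left (PowerSeries.map (algebraMap k (ResidueField A))), hbase]
  exact congrArg (fun s => MvPolynomial.eval₂ _ s P) hfun

end Red

/-- **Identification of deformations with solutions of the system (1)-(2).**
For every deformation `(x,y)` there is a unique monic `q` of degree `d`, `q ≡ tᵈ mod m`,
with `Q(x,y) ∈ qA[[t]]`; moreover `Q(x,y) = q·u` with `u` invertible.  Consequently
`(x,y) ↦ (q,x,y)` is a bijection onto the set of triples `(q,x,y)` as in the system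
(1)-(2); equivalently, the projection `(q,x,y) ↦ (x,y)` is bijective. -/
theorem deformations_eq_solutions {k : Type*} [Field k] {n l : ℕ} (hn : 1 ≤ n) (hl : 1 ≤ l)
    (f : Fin l → MvPolynomial (Fin n ⊕ Fin l) k)
    (x0 : Fin n → PowerSeries k) (y0 : Fin l → PowerSeries k)
    (hf0 : ∀ i, aeval (Sum.elim x0 y0) (f i) = 0)
    (hQ0 : aeval (Sum.elim x0 y0) (jacQ f) ≠ (0 : PowerSeries k))
    (d : ℕ)
    (hlow : ∀ j < d, PowerSeries.coeff j (aeval (Sum.elim x0 y0) (jacQ f)) = 0)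
    (hord : PowerSeries.coeff d (aeval (Sum.elim x0 y0) (jacQ f)) ≠ 0)
    (A : Type*) [CommRing A] [Algebra k A] [IsLocalRing A]
    (hnil : IsNilpotent (maximalIdeal A))
    (hres : Function.Bijective (algebraMap k (ResidueField A))) :
    (∀ p : (Fin n → PowerSeries A) × (Fin l → PowerSeries A), pairCond f x0 y0 p →
      ∃! q : Polynomial A, qCond d q ∧
        aeval (Sum.elim p.1 p.2) (jacQ f) ∈ Ideal.span {(q : PowerSeries A)}) ∧
    (∀ (p : (Fin n → PowerSeries A) × (Fin l → PowerSeries A)) (q : Polynomial A),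
      pairCond f x0 y0 p → qCond d q →
      aeval (Sum.elim p.1 p.2) (jacQ f) ∈ Ideal.span {(q : PowerSeries A)} →
      ∃ u : PowerSeries A, IsUnit u ∧
        aeval (Sum.elim p.1 p.2) (jacQ f) = (q : PowerSeries A) * u) ∧
    Function.Bijective
      (fun t : {w : Polynomial A × ((Fin n → PowerSeries A) × (Fin l → PowerSeries A)) //
          pairCond f x0 y0 w.2 ∧ qCond d w.1 ∧
          aeval (Sum.elim w.2.1 w.2.2) (jacQ f) ∈ Ideal.span {(w.1 : PowerSeries A)}} =>
        (⟨t.val.2, t.prop.1⟩ :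
          {p : (Fin n → PowerSeries A) × (Fin l → PowerSeries A) // pairCond f x0 y0 p})) := by
  classical
  have hφinj : Function.Injective (algebraMap k (ResidueField A)) := hres.1
  have hcoef : ∀ p : (Fin n → PowerSeries A) × (Fin l → PowerSeries A), pairCond f x0 y0 p →
      (∀ j < d, PowerSeries.coeff j (aeval (Sum.elim p.1 p.2) (jacQ f)) ∈ maximalIdeal A) ∧
      IsUnit (PowerSeries.coeff d (aeval (Sum.elim p.1 p.2) (jacQ f))) := by
    intro p hp
    have hm := aux_red f x0 y0 p hp (jacQ f)
    have hc : ∀ j, residue A (PowerSeries.coeff j (aeval (Sum.elim p.1 p.2) (jacQ f)))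
        = algebraMap k (ResidueField A)
            (PowerSeries.coeff j (aeval (Sum.elim x0 y0) (jacQ f))) := by
      intro j
      have := congrArg (PowerSeries.coeff j) hm
      rwa [PowerSeries.coeff_map, PowerSeries.coeff_map] at this
    constructor
    · intro j hj
      rw [← IsLocalRing.residue_eq_zero_iff, hc j, hlow j hj, map_zero]
    · rw [← IsLocalRing.notMem_maximalIdeal, ← IsLocalRing.residue_eq_zero_iff] at *
      rw [hc d]
      intro h0
      exact hord (hφinj (h0.trans (map_zero _).symm))
  have hex : ∀ p : (Fin n → PowerSeries A) × (Fin l → PowerSeries A), pairCond f x0 y0 p →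
      ∃ q : Polynomial A, ∃ u : PowerSeries A, qCond d q ∧ IsUnit u ∧
        aeval (Sum.elim p.1 p.2) (jacQ f) = (q : PowerSeries A) * u :=
    fun p hp => aux_exists d _ hnil (hcoef p hp).1 (hcoef p hp).2
  have huniq : ∀ (p : (Fin n → PowerSeries A) × (Fin l → PowerSeries A)),
      pairCond f x0 y0 p → ∀ q1 q2 : Polynomial A, qCond d q1 → qCond d q2 →
      aeval (Sum.elim p.1 p.2) (jacQ f) ∈ Ideal.span {(q1 : PowerSeries A)} →
      aeval (Sum.elim p.1 p.2) (jacQ f) ∈ Ideal.span {(q2 : PowerSeries A)} → q1 = q2 := by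
    intro p hp q1 q2 hq1 hq2 hm1 hm2
    obtain ⟨b1, hb1⟩ := Ideal.mem_span_singleton'.mp hm1
    obtain ⟨b2, hb2⟩ := Ideal.mem_span_singleton'.mp hm2
    have hu1 : IsUnit b1 := aux_bunit d q1 hq1 _ b1 (hcoef p hp).2 (by rw [← hb1, mul_comm])
    exact aux_uniq d hnil q1 q2 hq1 hq2 b1 b2 hu1
      (by rw [mul_comm ((q1 : PowerSeries A)) b1, mul_comm ((q2 : PowerSeries A)) b2, hb1, hb2])
  refine ⟨?_, ?_, ?_, ?_⟩
  · intro p hp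
    obtain ⟨q, u, hq, hu, heq⟩ := hex p hp
    have hmem : aeval (Sum.elim p.1 p.2) (jacQ f) ∈ Ideal.span {(q : PowerSeries A)} :=
      Ideal.mem_span_singleton'.mpr ⟨u, by rw [mul_comm, ← heq]⟩
    refine ⟨q, ⟨hq, hmem⟩, ?_⟩
    rintro q' ⟨hq', hmem'⟩
    exact huniq p hp q' q hq' hq hmem' hmem
  · intro p q hp hq hmem
    obtain ⟨b, hb⟩ := Ideal.mem_span_singleton'.mp hmem
    exact ⟨b, aux_bunit d q hq _ b (hcoef p hp).2 (by rw [← hb, mul_comm]),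
      by rw [← hb, mul_comm]⟩
  · rintro ⟨⟨q1, p1⟩, hp1, hq1, hm1⟩ ⟨⟨q2, p2⟩, hp2, hq2, hm2⟩ h
    have hval : p1 = p2 := congrArg Subtype.val h
    subst hval
    have : q1 = q2 := huniq p1 hp1 q1 q2 hq1 hq2 hm1 hm2
    subst this
    rfl
  · rintro ⟨p, hp⟩
    obtain ⟨q, u, hq, hu, heq⟩ := hex p hp
    exact ⟨⟨⟨q, p⟩, hp, hq, Ideal.mem_span_singleton'.mpr ⟨u, by rw [mul_comm, ← heq]⟩⟩, rfl⟩


end
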